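/- Let k ≥ 1 and let c_1, …, c_k ∈ ℝ^{k−1} be vectors that span ℝ^{k−1} and satisfy c_1 + c_2 + ⋯ + c_k = 0. Let Z = [0,c_1] + [0,c_2] + ⋯ + [0,c_k] be the Minkowski sum of the line segments [0,c_i]. Then Z equals the union, over all permutations π of {1,…,k}, of the simplices Σ_π = conv{c_{π(1)}, c_{π(1)}+c_{π(2)}, …, c_{π(1)}+⋯+c_{π(k)}}. -/

import Mathlib

open Pointwise

theorem stmt_14 (k : ℕ) (hk : 1 ≤ k) (c : Fin k → (Fin (k - 1) → ℝ))
    (hspan : Submodule.span ℝ (Set.range c) = ⊤)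
    (hsum : ∑ i, c i = 0) :
    (∑ i : Fin k, segment ℝ (0 : Fin (k - 1) → ℝ) (c i)) =
      ⋃ π : Equiv.Perm (Fin k),
        convexHull ℝ
          (Set.range fun j : Fin k =>
            ∑ i ∈ Finset.univ.filter (· ≤ j), c (π i)) := by
  classical
  have hZconv : Convex ℝ (∑ i : Fin k, segment ℝ (0 : Fin (k - 1) → ℝ) (c i)) := by
    refine Finset.sum_induction _ (fun s => Convex ℝ s) (fun a b ha hb => ha.add hb) ?_ ?_
    · simpa [← Set.singleton_zero] using (convex_singleton (𝕜 := ℝ) (0 : Fin (k - 1) → ℝ))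
    · exact fun i _ => convex_segment _ _
  apply Set.Subset.antisymm
  · -- hard direction
    intro x hx
    rw [Set.mem_fintype_sum] at hx
    obtain ⟨g, hg, hgx⟩ := hx
    -- extract coefficients
    have hti : ∀ i, ∃ t : ℝ, 0 ≤ t ∧ t ≤ 1 ∧ t • c i = g i := by
      intro i
      have := hg i
      rw [segment_eq_image'] at this
      obtain ⟨t, ht, h⟩ := this
      exact ⟨t, ht.1, ht.2, by simpa using h⟩
    choose t ht0 ht1 htg using hti
    set σ : Equiv.Perm (Fin k) := Tuple.sort t with hσ
    set π : Equiv.Perm (Fin k) := Fin.revPerm.trans σ with hπ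
    have hanti : Antitone (fun i => t (π i)) := by
      intro i j hij
      exact Tuple.monotone_sort t (Fin.rev_le_rev.mpr hij)
    set u : Fin k → ℝ := fun i => t (π i) with hu
    set v : ℕ → ℝ := fun n => if h : n < k then u ⟨n, h⟩ else 0 with hv
    have hvcoe : ∀ j : Fin k, v (j : ℕ) = u j := by
      intro j; simp [hv, j.isLt]
    have hv0 : ∀ n, 0 ≤ v n := by
      intro n
      by_cases h : n < k
      · simp only [hv, dif_pos h]; exact ht0 _
      · simp [hv, h]
    have hv1 : ∀ n, v n ≤ 1 := by
      intro n
      by_cases h : n < k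
      · simp only [hv, dif_pos h]; exact ht1 _
      · simp [hv, h]
    have hvanti : ∀ m n : ℕ, m ≤ n → v n ≤ v m := by
      intro m n hmn
      by_cases hn : n < k
      · have hm : m < k := lt_of_le_of_lt hmn hn
        simp only [hv, dif_pos hn, dif_pos hm]
        exact hanti (by exact_mod_cast hmn)
      · simp only [hv, dif_neg hn]
        exact hv0 m
    set w : Fin k → ℝ := fun j =>
      (v j - v ((j : ℕ) + 1)) + (if (j : ℕ) + 1 = k then 1 - v 0 else 0) with hw
    have hw0 : ∀ j : Fin k, 0 ≤ w j := by
      intro j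
      have h1 : 0 ≤ v (j : ℕ) - v ((j : ℕ) + 1) :=
        sub_nonneg.mpr (hvanti _ _ (Nat.le_succ _))
      have h2 : 0 ≤ (if (j : ℕ) + 1 = k then 1 - v 0 else 0) := by
        split
        · linarith [hv1 0]
        · exact le_rfl
      have hwj : w j = (v (j : ℕ) - v ((j : ℕ) + 1))
          + (if (j : ℕ) + 1 = k then 1 - v 0 else 0) := rfl
      rw [hwj]; linarith
    have hvk : v k = 0 := by simp [hv]
    have hlast : ∀ j : Fin k, ((j : ℕ) + 1 = k) ↔ j = ⟨k - 1, Nat.sub_lt hk one_pos⟩ := by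
      intro j
      have hj := j.isLt
      constructor
      · intro h; apply Fin.ext; simp only []; omega
      · rintro rfl; simp only []; omega
    have hind : ∀ s : Finset (Fin k), (⟨k - 1, Nat.sub_lt hk one_pos⟩ : Fin k) ∈ s →
        ∑ j ∈ s, (if (j : ℕ) + 1 = k then (1 : ℝ) - v 0 else 0) = 1 - v 0 := by
      intro s hs
      rw [Finset.sum_congr rfl (fun j _ => if_congr (hlast j) rfl rfl),
        Finset.sum_ite_eq' s _ (fun _ => (1 : ℝ) - v 0), if_pos hs]
    have htelgen : ∀ i : Fin k,
        ∑ j : Fin k, (if i ≤ j then v (j : ℕ) - v ((j : ℕ) + 1) else 0) = u i := by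
      intro i
      have hF : ∀ j : Fin k, (if i ≤ j then v (j : ℕ) - v ((j : ℕ) + 1) else 0)
          = (fun n : ℕ => if (i : ℕ) ≤ n then v n - v (n + 1) else 0) (j : ℕ) := by
        intro j
        show _ = if (i : ℕ) ≤ (j : ℕ) then v (j : ℕ) - v ((j : ℕ) + 1) else 0
        exact if_congr Fin.le_def rfl rfl
      rw [Finset.sum_congr rfl (fun j _ => hF j),
        Fin.sum_univ_eq_sum_range (fun n : ℕ => if (i : ℕ) ≤ n then v n - v (n + 1) else 0) k]
      have hVF : ∀ n : ℕ, (if (i : ℕ) ≤ n then v n - v (n + 1) else 0)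
          = v (max n (i : ℕ)) - v (max (n + 1) (i : ℕ)) := by
        intro n
        by_cases h : (i : ℕ) ≤ n
        · rw [if_pos h, Nat.max_eq_left h, Nat.max_eq_left (by omega)]
        · rw [if_neg h, Nat.max_eq_right (by omega), Nat.max_eq_right (by omega), sub_self]
      rw [Finset.sum_congr rfl (fun n _ => hVF n),
        Finset.sum_range_sub' (fun n => v (max n (i : ℕ))) k]
      have h1 : max 0 (i : ℕ) = (i : ℕ) := by omega
      have h2 : max k (i : ℕ) = k := by have := i.isLt; omega
      rw [h1, h2, hvk, hvcoe i, sub_zero]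
    have hwsum : ∑ j : Fin k, w j = 1 := by
      have hwj : ∀ j : Fin k, w j = (v (j : ℕ) - v ((j : ℕ) + 1))
          + (if (j : ℕ) + 1 = k then 1 - v 0 else 0) := fun _ => rfl
      rw [Finset.sum_congr rfl (fun j _ => hwj j), Finset.sum_add_distrib]
      have e1 : ∑ j : Fin k, (v (j : ℕ) - v ((j : ℕ) + 1)) = v 0 - v k := by
        rw [Fin.sum_univ_eq_sum_range (fun n => v n - v (n + 1)) k]
        exact Finset.sum_range_sub' v k
      rw [e1, hind Finset.univ (Finset.mem_univ _), hvk]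
      ring
    have hwtail : ∀ i : Fin k, ∑ j ∈ Finset.univ.filter (i ≤ ·), w j
        = u i + (1 - v 0) := by
      intro i
      have hwj : ∀ j : Fin k, w j = (v (j : ℕ) - v ((j : ℕ) + 1))
          + (if (j : ℕ) + 1 = k then 1 - v 0 else 0) := fun _ => rfl
      rw [Finset.sum_congr rfl (fun j _ => hwj j), Finset.sum_add_distrib]
      have hm : (⟨k - 1, Nat.sub_lt hk one_pos⟩ : Fin k) ∈ Finset.univ.filter (i ≤ ·) := by
        simp only [Finset.mem_filter, Finset.mem_univ, true_and]
        rw [Fin.le_def]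
        have := i.isLt
        simp only []
        omega
      rw [hind _ hm]
      have : ∑ j ∈ Finset.univ.filter (i ≤ ·), (v (j : ℕ) - v ((j : ℕ) + 1)) = u i := by
        rw [Finset.sum_filter]
        exact htelgen i
      rw [this]
    -- conclusion
    set S : Fin k → (Fin (k - 1) → ℝ) := fun j =>
      ∑ i ∈ Finset.univ.filter (· ≤ j), c (π i) with hS
    have hmem : ∑ j : Fin k, w j • S j ∈
        convexHull ℝ (Set.range fun j : Fin k =>
          ∑ i ∈ Finset.univ.filter (· ≤ j), c (π i)) :=
      Convex.sum_mem (convex_convexHull ℝ _) (fun j _ => hw0 j) hwsum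
        (fun j _ => subset_convexHull ℝ _ (Set.mem_range_self j))
    have hxeq : ∑ j : Fin k, w j • S j = x := by
      have step1 : ∀ j : Fin k, w j • S j
          = ∑ i : Fin k, (if i ≤ j then w j • c (π i) else 0) := by
        intro j
        rw [hS]
        simp only []
        rw [Finset.smul_sum, Finset.sum_filter]
      rw [Finset.sum_congr rfl (fun j _ => step1 j), Finset.sum_comm]
      have step2 : ∀ i : Fin k, ∑ j : Fin k, (if i ≤ j then w j • c (π i) else 0)
          = (u i + (1 - v 0)) • c (π i) := by
        intro i
        have : ∀ j : Fin k, (if i ≤ j then w j • c (π i) else 0)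
            = (if i ≤ j then w j else 0) • c (π i) := by
          intro j; split <;> simp
        rw [Finset.sum_congr rfl (fun j _ => this j), ← Finset.sum_smul,
          ← Finset.sum_filter, hwtail i]
      rw [Finset.sum_congr rfl (fun i _ => step2 i)]
      have : ∀ i : Fin k, (u i + (1 - v 0)) • c (π i)
          = g (π i) + (1 - v 0) • c (π i) := by
        intro i
        rw [add_smul, htg (π i)]
      rw [Finset.sum_congr rfl (fun i _ => this i), Finset.sum_add_distrib,
        ← Finset.smul_sum, Equiv.sum_comp π c, hsum, smul_zero, add_zero,
        Equiv.sum_comp π g, hgx]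
    rw [hxeq] at hmem
    exact Set.mem_iUnion.mpr ⟨π, hmem⟩
  · -- easy direction
    intro x hx
    simp only [Set.mem_iUnion] at hx
    obtain ⟨π, hx⟩ := hx
    refine convexHull_min ?_ hZconv hx
    rintro y ⟨j, rfl⟩
    show (∑ i ∈ Finset.univ.filter (· ≤ j), c (π i)) ∈ ∑ i : Fin k, segment ℝ 0 (c i)
    have key : ∑ i ∈ Finset.univ.filter (· ≤ j), c (π i)
        = ∑ i : Fin k, (if π.symm i ≤ j then c i else 0) := by
      rw [← Equiv.sum_comp π (fun i => if π.symm i ≤ j then c i else 0)]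
      simp only [Equiv.symm_apply_apply]
      rw [Finset.sum_filter]
    rw [key]
    apply Set.finset_sum_mem_finset_sum
    intro i _
    by_cases h : π.symm i ≤ j
    · simpa [h] using right_mem_segment ℝ (0 : Fin (k - 1) → ℝ) (c i)
    · simpa [h] using left_mem_segment ℝ (0 : Fin (k - 1) → ℝ) (c i)
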